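/- X₁ (the set of all Σ δₙ αⁿ over revolving sequences starting with nonzero digit 1) equals the attractor K_{α,θ} of the IFS {ψ₁(z) = αz, ψ₂(z) = α e^{iθ} z + α}; that is, X₁ is the unique nonempty compact set K with K = ψ₁(K) ∪ ψ₂(K). -/

import Mathlib

open Complex

/-- e^{iθ} -/
noncomputable def rot (θ : ℝ) : ℂ := Complex.exp (θ * Complex.I)

/-- The digit set Δ_θ = {0, 1, e^{iθ}, …, e^{(p-1)iθ}}. -/
def Delta (θ : ℝ) (p : ℕ) : Set ℂ := insert 0 {z | ∃ k, k < p ∧ z = rot θ ^ k}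

/-- Generalized Revolving Condition: each nonzero digit is e^{iθ} times the previous
nonzero digit. Sequences are indexed from 1; index 0 is a dummy (digit 0). -/
def GRC (θ : ℝ) (δ : ℕ → ℂ) : Prop :=
  ∀ j k : ℕ, j < k → δ j ≠ 0 → δ k ≠ 0 → (∀ m, j < m → m < k → δ m = 0) →
    δ k = rot θ * δ j

/-- Membership in W_θ (with the convention δ 0 = 0, i.e. sequences start at index 1). -/
def Wrev (θ : ℝ) (p : ℕ) (δ : ℕ → ℂ) : Prop :=
  δ 0 = 0 ∧ (∀ n, δ n ∈ Delta θ p) ∧ GRC θ δ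

/-- The first nonzero digit of δ is c (or δ is identically zero). -/
def FirstNonzero (δ : ℕ → ℂ) (c : ℂ) : Prop :=
  (∀ n, δ n = 0) ∨ ∃ j, δ j = c ∧ ∀ m, m < j → δ m = 0

/-- X_c : points from revolving sequences whose first nonzero digit is c. -/
noncomputable def Xc (α : ℂ) (θ : ℝ) (p : ℕ) (c : ℂ) : Set ℂ :=
  {x | ∃ δ : ℕ → ℂ, Wrev θ p δ ∧ FirstNonzero δ c ∧ x = ∑' n, δ n * α ^ n}

/-- X_{α,θ} : points from all revolving sequences. -/
noncomputable def Xfull (α : ℂ) (θ : ℝ) (p : ℕ) : Set ℂ :=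
  {x | ∃ δ : ℕ → ℂ, Wrev θ p δ ∧ x = ∑' n, δ n * α ^ n}

lemma rot_norm (θ : ℝ) : ‖rot θ‖ = 1 := by
  rw [rot]; exact Complex.norm_exp_ofReal_mul_I θ

lemma rot_ne_zero (θ : ℝ) : rot θ ≠ 0 := Complex.exp_ne_zero _

lemma rot_pow_p (θ : ℝ) (p : ℕ) (q : ℤ) (hp : 0 < p)
    (hθ : θ = 2 * Real.pi * (q : ℝ) / (p : ℝ)) : rot θ ^ p = 1 := by
  rw [rot, ← Complex.exp_nat_mul]
  have hp' : (p : ℂ) ≠ 0 := Nat.cast_ne_zero.mpr hp.ne'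
  have : (p : ℂ) * (θ * Complex.I) = (q : ℂ) * (2 * Real.pi * Complex.I) := by
    rw [hθ]; push_cast; field_simp
  rw [this, Complex.exp_int_mul_two_pi_mul_I]

lemma zero_mem_Delta (θ : ℝ) (p : ℕ) : (0:ℂ) ∈ Delta θ p := Set.mem_insert _ _

lemma one_mem_Delta (θ : ℝ) (p : ℕ) (hp : 0 < p) : (1:ℂ) ∈ Delta θ p :=
  Set.mem_insert_iff.mpr (Or.inr ⟨0, hp, (pow_zero _).symm⟩)

lemma norm_le_one_of_mem_Delta {θ : ℝ} {p : ℕ} {z : ℂ} (hz : z ∈ Delta θ p) : ‖z‖ ≤ 1 := by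
  rcases hz with h | ⟨k, _, rfl⟩
  · simp [h]
  · rw [norm_pow, rot_norm, one_pow]

lemma rot_mul_mem_Delta {θ : ℝ} {p : ℕ} (h1 : rot θ ^ p = 1) (hp : 0 < p) {z : ℂ}
    (hz : z ∈ Delta θ p) : rot θ * z ∈ Delta θ p := by
  rcases hz with h | ⟨k, hk, rfl⟩
  · subst h; simpa using zero_mem_Delta θ p
  · rcases lt_or_eq_of_le (Nat.succ_le_of_lt hk) with h | h
    · exact Or.inr ⟨k+1, h, (pow_succ' _ _).symm⟩
    · refine Or.inr ⟨0, hp, ?_⟩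
      have h' : k + 1 = p := h
      rw [pow_zero, ← pow_succ' (rot θ) k, h', h1]

lemma rot_pow_mul_mem_Delta {θ : ℝ} {p : ℕ} (h1 : rot θ ^ p = 1) (hp : 0 < p) (j : ℕ) {z : ℂ}
    (hz : z ∈ Delta θ p) : rot θ ^ j * z ∈ Delta θ p := by
  induction j with
  | zero => simpa using hz
  | succ n ih =>
      have := rot_mul_mem_Delta h1 hp ih
      rwa [← mul_assoc, ← pow_succ'] at this

lemma firstNonzero_one_iff (δ : ℕ → ℂ) :
    FirstNonzero δ 1 ↔ ∀ j, (∀ m, m < j → δ m = 0) → δ j = 0 ∨ δ j = 1 := by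
  constructor
  · rintro (hall | ⟨j₀, hj₀, hbef⟩) j hj
    · exact Or.inl (hall j)
    · rcases lt_trichotomy j j₀ with h | h | h
      · exact Or.inl (hbef j h)
      · subst h; exact Or.inr hj₀
      · exact absurd (hj j₀ h) (by rw [hj₀]; exact one_ne_zero)
  · intro h
    by_cases hall : ∀ n, δ n = 0
    · exact Or.inl hall
    · push_neg at hall
      have hex : ∃ n, δ n ≠ 0 := hall
      classical
      let j₀ := Nat.find hex
      have hj₀ : δ j₀ ≠ 0 := Nat.find_spec hex
      have hbef : ∀ m, m < j₀ → δ m = 0 := fun m hm => by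
        by_contra hc; exact absurd hm (not_lt.mpr (Nat.find_le hc))
      rcases h j₀ hbef with h' | h'
      · exact absurd h' hj₀
      · exact Or.inr ⟨j₀, h', hbef⟩

section Sums
variable {α : ℂ}

lemma summable_digits (hα : ‖α‖ < 1) {δ : ℕ → ℂ} (hb : ∀ n, ‖δ n‖ ≤ 1) :
    Summable (fun n => δ n * α ^ n) := by
  apply Summable.of_norm_bounded (summable_geometric_of_lt_one (norm_nonneg α) hα)
  intro n
  rw [norm_mul, norm_pow]
  exact mul_le_of_le_one_left (by positivity) (hb n)

/-- tail of a digit sequence -/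
def dtail (δ : ℕ → ℂ) : ℕ → ℂ := fun n => if n = 0 then 0 else δ (n+1)

lemma dtail_bound {δ : ℕ → ℂ} (hb : ∀ n, ‖δ n‖ ≤ 1) : ∀ n, ‖dtail δ n‖ ≤ 1 := by
  intro n; unfold dtail; split
  · simp
  · exact hb _

lemma sum_tail (hα : ‖α‖ < 1) {δ : ℕ → ℂ} (h0 : δ 0 = 0) (hb : ∀ n, ‖δ n‖ ≤ 1) :
    ∑' n, δ n * α ^ n = α * (δ 1 + ∑' n, dtail δ n * α ^ n) := by
  have hs : Summable (fun n => δ n * α ^ n) := summable_digits hα hb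
  have hs1 : Summable (fun n => δ (n+1) * α ^ n) :=
    summable_digits hα (fun n => hb (n+1))
  have hst : Summable (fun n => dtail δ n * α ^ n) :=
    summable_digits hα (dtail_bound hb)
  rw [hs.tsum_eq_zero_add, hst.tsum_eq_zero_add]
  simp only [pow_zero, h0, zero_mul, zero_add]
  have e1 : ∀ n : ℕ, δ (n+1) * α ^ (n+1) = α * (δ (n+1) * α ^ n) := by
    intro n; ring
  simp only [e1, tsum_mul_left]
  rw [hs1.tsum_eq_zero_add]
  have e2 : ∀ n : ℕ, dtail δ (n+1) * α ^ (n+1) = α * (δ (n+2) * α ^ n) := by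
    intro n; simp [dtail]; ring
  simp only [e2, tsum_mul_left]
  have e3 : ∀ n : ℕ, δ (n+1+1) * α ^ (n+1) = α * (δ (n+2) * α ^ n) := by
    intro n; ring
  simp only [e3, tsum_mul_left, pow_zero, mul_one]
  simp [dtail]

lemma sum_smul (c : ℂ) (δ : ℕ → ℂ) :
    ∑' n, (c * δ n) * α ^ n = c * ∑' n, δ n * α ^ n := by
  simp only [mul_assoc, tsum_mul_left]

end Sums

lemma Wrev_dtail {θ : ℝ} {p : ℕ} {δ : ℕ → ℂ} (h : Wrev θ p δ) : Wrev θ p (dtail δ) := by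
  refine ⟨if_pos rfl, fun n => ?_, ?_⟩
  · unfold dtail; split
    · exact zero_mem_Delta θ p
    · exact h.2.1 _
  · intro j k hjk hj hk hgap
    have hj0 : j ≠ 0 := by rintro rfl; exact hj (if_pos rfl)
    have hk0 : k ≠ 0 := by omega
    simp only [dtail, if_neg hj0, if_neg hk0] at hj hk ⊢
    refine h.2.2 (j+1) (k+1) (by omega) hj hk ?_
    intro m hm1 hm2
    have hm0 : m - 1 ≠ 0 := by omega
    have := hgap (m-1) (by omega) (by omega)
    rw [dtail, if_neg hm0, show m - 1 + 1 = m from by omega] at this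
    exact this

lemma Wrev_smul {θ : ℝ} {p : ℕ} (h1 : rot θ ^ p = 1) (hp : 0 < p) (j : ℕ) {δ : ℕ → ℂ}
    (h : Wrev θ p δ) : Wrev θ p (fun n => rot θ ^ j * δ n) := by
  have hr : rot θ ^ j ≠ 0 := pow_ne_zero _ (rot_ne_zero θ)
  refine ⟨by simp [h.1], fun n => rot_pow_mul_mem_Delta h1 hp j (h.2.1 n), ?_⟩
  intro a b hab ha hb hgap
  simp only [ne_eq, mul_eq_zero, not_or] at ha hb
  have := h.2.2 a b hab ha.2 hb.2 (fun m hm1 hm2 => by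
    have := hgap m hm1 hm2
    simp only [mul_eq_zero] at this
    tauto)
  simp only [this]; ring

lemma X1_set_eq (α : ℂ) (θ : ℝ) (p : ℕ) (hp : 0 < p) (h1 : rot θ ^ p = 1) (hα : ‖α‖ < 1) :
    Xc α θ p 1 =
      (fun z => α * z) '' Xc α θ p 1 ∪ (fun z => α * rot θ * z + α) '' Xc α θ p 1 := by
  have hr1 : rot θ * rot θ ^ (p - 1) = 1 := by
    rw [← pow_succ', show p - 1 + 1 = p from by omega, h1]
  ext x
  constructor
  · rintro ⟨δ, hW, hF, rfl⟩
    have hb : ∀ n, ‖δ n‖ ≤ 1 := fun n => norm_le_one_of_mem_Delta (hW.2.1 n)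
    have hFi := (firstNonzero_one_iff δ).mp hF
    have hδ1 : δ 1 = 0 ∨ δ 1 = 1 := hFi 1 (by intro m hm; interval_cases m; exact hW.1)
    have htailW : Wrev θ p (dtail δ) := Wrev_dtail hW
    have hsum := sum_tail hα hW.1 hb
    rcases hδ1 with h1' | h1'
    · left
      refine ⟨∑' n, dtail δ n * α ^ n, ⟨dtail δ, htailW, ?_, rfl⟩, ?_⟩
      · refine (firstNonzero_one_iff _).mpr ?_
        intro j hj
        by_cases hj0 : j = 0
        · subst hj0; left; simp [dtail]
        · have hall : ∀ m, m < j + 1 → δ m = 0 := by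
            intro m hm
            match m with
            | 0 => exact hW.1
            | 1 => exact h1'
            | (i+2) =>
                have := hj (i+1) (by omega)
                simpa [dtail] using this
          simpa [dtail, hj0] using hFi (j+1) hall
      · simp only
        rw [hsum, h1', zero_add]
    · right
      refine ⟨∑' n, (rot θ ^ (p-1) * dtail δ n) * α ^ n,
        ⟨fun n => rot θ ^ (p-1) * dtail δ n, Wrev_smul h1 hp (p-1) htailW, ?_, rfl⟩, ?_⟩
      · refine (firstNonzero_one_iff _).mpr ?_
        intro j hj
        by_cases hj0 : j = 0
        · subst hj0; left; simp [dtail]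
        · by_cases h2 : δ (j+1) = 0
          · left; simp [dtail, hj0, h2]
          · have hgap : ∀ m, 1 < m → m < j + 1 → δ m = 0 := by
              intro m hm1 hm2
              have hm0 : m - 1 ≠ 0 := by omega
              have := hj (m-1) (by omega)
              simp only [dtail, if_neg hm0, show m - 1 + 1 = m from by omega,
                mul_eq_zero] at this
              rcases this with h | h
              · exact absurd h (pow_ne_zero _ (rot_ne_zero θ))
              · exact h
            have := hW.2.2 1 (j+1) (by omega) (by rw [h1']; exact one_ne_zero) h2 hgap
            rw [h1', mul_one] at this
            right
            simp only [dtail, if_neg hj0, this]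
            calc rot θ ^ (p-1) * rot θ = rot θ * rot θ ^ (p-1) := by ring
              _ = 1 := hr1
      · simp only
        rw [sum_smul, hsum, h1']
        rw [show α * rot θ * (rot θ ^ (p-1) * ∑' n, dtail δ n * α ^ n) + α
            = α * (rot θ * rot θ ^ (p-1)) * (∑' n, dtail δ n * α ^ n) + α from by ring, hr1]
        ring
  · rintro (⟨y, ⟨δ, hW, hF, rfl⟩, rfl⟩ | ⟨y, ⟨δ, hW, hF, rfl⟩, rfl⟩)
    · -- ψ₁ image
      set δ' : ℕ → ℂ := fun n => if n = 0 then 0 else δ (n-1) with hδ'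
      have hdig : ∀ n, δ' n ∈ Delta θ p := by
        intro n; simp only [hδ']; split
        · exact zero_mem_Delta θ p
        · exact hW.2.1 _
      have hW' : Wrev θ p δ' := by
        refine ⟨if_pos rfl, hdig, ?_⟩
        intro j k hjk hj hk hgap
        have hj0 : j ≠ 0 := by rintro rfl; exact hj (if_pos rfl)
        have hk0 : k ≠ 0 := by omega
        simp only [hδ', if_neg hj0, if_neg hk0] at hj hk ⊢
        refine hW.2.2 (j-1) (k-1) (by omega) hj hk ?_
        intro m hm1 hm2
        have := hgap (m+1) (by omega) (by omega)
        simpa [hδ'] using this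
      refine ⟨δ', hW', ?_, ?_⟩
      · refine (firstNonzero_one_iff _).mpr ?_
        intro j hj
        by_cases hj0 : j = 0
        · subst hj0; left; exact if_pos rfl
        · have hall : ∀ m, m < j - 1 → δ m = 0 := by
            intro m hm
            have := hj (m+1) (by omega)
            simpa [hδ'] using this
          have := (firstNonzero_one_iff δ).mp hF (j-1) hall
          simpa [hδ', hj0] using this
      · have hb' : ∀ n, ‖δ' n‖ ≤ 1 := fun n => norm_le_one_of_mem_Delta (hdig n)
        have hsum' := sum_tail hα (if_pos rfl : δ' 0 = 0) hb'
        have ht : dtail δ' = δ := by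
          funext n
          by_cases hn : n = 0
          · subst hn; simp [dtail, hW.1]
          · simp [dtail, hδ', hn]
        have hδ'1 : δ' 1 = 0 := by simp [hδ', hW.1]
        rw [hsum', ht, hδ'1, zero_add]
    · -- ψ₂ image
      set δ' : ℕ → ℂ := fun n => if n = 0 then 0 else if n = 1 then 1 else rot θ * δ (n-1)
        with hδ'
      have hdig : ∀ n, δ' n ∈ Delta θ p := by
        intro n; simp only [hδ']; split
        · exact zero_mem_Delta θ p
        · split
          · exact one_mem_Delta θ p hp
          · exact rot_mul_mem_Delta h1 hp (hW.2.1 _)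
      have hFi := (firstNonzero_one_iff δ).mp hF
      have hW' : Wrev θ p δ' := by
        refine ⟨if_pos rfl, hdig, ?_⟩
        intro j k hjk hj hk hgap
        have hj0 : j ≠ 0 := by rintro rfl; exact hj (if_pos rfl)
        have hk0 : k ≠ 0 := by omega
        have hk1 : k ≠ 1 := by omega
        rcases eq_or_ne j 1 with hj1 | hj1
        · subst hj1
          have hkd : δ' k = rot θ * δ (k-1) := by simp [hδ', hk0, hk1]
          have hknz : δ (k-1) ≠ 0 := by
            intro h; rw [hkd, h, mul_zero] at hk; exact hk rfl
          have hall : ∀ m, m < k - 1 → δ m = 0 := by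
            intro m hm
            by_cases hm0 : m = 0
            · subst hm0; exact hW.1
            · have := hgap (m+1) (by omega) (by omega)
              simp only [hδ', if_neg (by omega : (m+1:ℕ) ≠ 0),
                if_neg (by omega : (m+1:ℕ) ≠ 1), mul_eq_zero] at this
              rcases this with h | h
              · exact absurd h (rot_ne_zero θ)
              · simpa using h
          have := hFi (k-1) hall
          rcases this with h | h
          · exact absurd h hknz
          · rw [hkd, h, mul_one, show δ' 1 = 1 from by simp [hδ'], mul_one]
        · have hj2 : 2 ≤ j := by omega
          simp only [hδ', if_neg hj0, if_neg hj1, if_neg hk0, if_neg hk1,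
            ne_eq, mul_eq_zero, not_or] at hj hk ⊢
          have := hW.2.2 (j-1) (k-1) (by omega) hj.2 hk.2 ?_
          · rw [this]
          · intro m hm1 hm2
            have := hgap (m+1) (by omega) (by omega)
            simp only [hδ', if_neg (by omega : (m+1:ℕ) ≠ 0),
              if_neg (by omega : (m+1:ℕ) ≠ 1), mul_eq_zero] at this
            rcases this with h | h
            · exact absurd h (rot_ne_zero θ)
            · simpa using h
      refine ⟨δ', hW', Or.inr ⟨1, by simp [hδ'], ?_⟩, ?_⟩
      · intro m hm; interval_cases m; exact if_pos rfl
      · have hb' : ∀ n, ‖δ' n‖ ≤ 1 := fun n => norm_le_one_of_mem_Delta (hdig n)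
        have hsum' := sum_tail hα (if_pos rfl : δ' 0 = 0) hb'
        have ht : dtail δ' = fun n => rot θ * δ n := by
          funext n
          by_cases hn : n = 0
          · subst hn; simp [dtail, hW.1]
          · simp [dtail, hδ', hn]
        have hδ'1 : δ' 1 = 1 := by simp [hδ']
        rw [hsum', ht, hδ'1, sum_smul]
        ring

lemma Delta_finite (θ : ℝ) (p : ℕ) : (Delta θ p).Finite := by
  have : Delta θ p = insert 0 ((fun k => rot θ ^ k) '' (Set.Iio p)) := by
    ext z
    simp only [Delta, Set.mem_insert_iff, Set.mem_setOf_eq, Set.mem_image, Set.mem_Iio]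
    constructor
    · rintro (h | ⟨k, hk, rfl⟩)
      · exact Or.inl h
      · exact Or.inr ⟨k, hk, rfl⟩
    · rintro (h | ⟨k, hk, rfl⟩)
      · exact Or.inl h
      · exact Or.inr ⟨k, hk, rfl⟩
  rw [this]
  exact ((Set.finite_Iio p).image _).insert 0

lemma X1_nonempty (α : ℂ) (θ : ℝ) (p : ℕ) : (Xc α θ p 1).Nonempty :=
  ⟨∑' n, (0:ℂ) * α ^ n, fun _ => 0,
    ⟨rfl, fun _ => zero_mem_Delta θ p, fun _ _ _ hj => absurd rfl hj⟩,
    Or.inl (fun _ => rfl), rfl⟩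

lemma X1_compact (α : ℂ) (θ : ℝ) (p : ℕ) (hα : ‖α‖ < 1) : IsCompact (Xc α θ p 1) := by
  classical
  have hfin : (Delta θ p).Finite := Delta_finite θ p
  haveI : Finite ↥(Delta θ p) := hfin.to_subtype
  haveI : DiscreteTopology ↥(Delta θ p) := Finite.instDiscreteTopology
  let G : (ℕ → ↥(Delta θ p)) → ℂ := fun ω => ∑' n, (ω n : ℂ) * α ^ n
  have hG : Continuous G := by
    apply continuous_tsum (u := fun n => ‖α‖ ^ n)
    · intro n
      exact (continuous_subtype_val.comp (continuous_apply n)).mul continuous_const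
    · exact summable_geometric_of_lt_one (norm_nonneg α) hα
    · intro n ω
      rw [norm_mul, norm_pow]
      exact mul_le_of_le_one_left (by positivity) (norm_le_one_of_mem_Delta (ω n).2)
  have hatom : ∀ (i : ℕ) (P : ↥(Delta θ p) → Prop),
      IsClosed {ω : ℕ → ↥(Delta θ p) | P (ω i)} := fun i P =>
    (isClosed_discrete _).preimage (continuous_apply i)
  let C : Set (ℕ → ↥(Delta θ p)) :=
    {ω | (ω 0 : ℂ) = 0 ∧ GRC θ (fun n => (ω n : ℂ)) ∧ FirstNonzero (fun n => (ω n : ℂ)) 1}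
  have himg : Xc α θ p 1 = G '' C := by
    ext x
    constructor
    · rintro ⟨δ, hW, hF, rfl⟩
      exact ⟨fun n => ⟨δ n, hW.2.1 n⟩, ⟨hW.1, hW.2.2, hF⟩, rfl⟩
    · rintro ⟨ω, hω, rfl⟩
      exact ⟨fun n => ω n, ⟨hω.1, fun n => (ω n).2, hω.2.1⟩, hω.2.2, rfl⟩
  have hGRCclosed : IsClosed {ω : ℕ → ↥(Delta θ p) | GRC θ (fun n => (ω n : ℂ))} := by
    have hrw : {ω : ℕ → ↥(Delta θ p) | GRC θ (fun n => (ω n : ℂ))} =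
        ⋂ (j : ℕ), ⋂ (k : ℕ), {ω : ℕ → ↥(Delta θ p) | j < k → (ω j : ℂ) ≠ 0 →
          (ω k : ℂ) ≠ 0 → (∀ m, j < m → m < k → (ω m : ℂ) = 0) →
          (ω k : ℂ) = rot θ * (ω j : ℂ)} := by
      ext ω
      simp only [Set.mem_iInter, Set.mem_setOf_eq]
      exact Iff.rfl
    rw [hrw]
    refine isClosed_iInter fun j => isClosed_iInter fun k => ?_
    by_cases hjk : j < k
    · have hrw2 : {ω : ℕ → ↥(Delta θ p) | j < k → (ω j : ℂ) ≠ 0 →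
          (ω k : ℂ) ≠ 0 → (∀ m, j < m → m < k → (ω m : ℂ) = 0) →
          (ω k : ℂ) = rot θ * (ω j : ℂ)} =
          {ω : ℕ → ↥(Delta θ p) | (ω j : ℂ) = 0} ∪ {ω | (ω k : ℂ) = 0} ∪
          (⋃ m ∈ Set.Ioo j k, {ω : ℕ → ↥(Delta θ p) | (ω m : ℂ) ≠ 0}) ∪
          {ω | (ω k : ℂ) = rot θ * (ω j : ℂ)} := by
        ext ω
        simp only [Set.mem_setOf_eq, Set.mem_union, Set.mem_iUnion, Set.mem_Ioo,
          exists_prop]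
        constructor
        · intro h
          by_cases hj : (ω j : ℂ) = 0
          · tauto
          by_cases hk : (ω k : ℂ) = 0
          · tauto
          by_cases hgap : ∀ m, j < m → m < k → (ω m : ℂ) = 0
          · have := h hjk hj hk hgap
            tauto
          · push_neg at hgap
            obtain ⟨m, hm1, hm2, hm3⟩ := hgap
            exact Or.inl (Or.inr ⟨m, ⟨hm1, hm2⟩, hm3⟩)
        · rintro (((hj | hk) | ⟨m, ⟨hm1, hm2⟩, hm3⟩) | heq) _ hj' hk' hgap'
          · exact absurd hj hj'
          · exact absurd hk hk'
          · exact absurd (hgap' m hm1 hm2) hm3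
          · exact heq
      rw [hrw2]
      refine (((hatom j (fun x => (x:ℂ) = 0)).union (hatom k (fun x => (x:ℂ) = 0))).union
        ?_).union ?_
      · exact (Set.finite_Ioo j k).isClosed_biUnion fun m _ => hatom m (fun x => (x:ℂ) ≠ 0)
      · exact isClosed_eq (continuous_subtype_val.comp (continuous_apply k))
          (continuous_const.mul (continuous_subtype_val.comp (continuous_apply j)))
    · have : {ω : ℕ → ↥(Delta θ p) | j < k → (ω j : ℂ) ≠ 0 →
          (ω k : ℂ) ≠ 0 → (∀ m, j < m → m < k → (ω m : ℂ) = 0) →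
          (ω k : ℂ) = rot θ * (ω j : ℂ)} = Set.univ :=
        Set.eq_univ_of_forall fun ω h => absurd h hjk
      rw [this]; exact isClosed_univ
  have hFNclosed : IsClosed {ω : ℕ → ↥(Delta θ p) | FirstNonzero (fun n => (ω n : ℂ)) 1} := by
    have hrw : {ω : ℕ → ↥(Delta θ p) | FirstNonzero (fun n => (ω n : ℂ)) 1} =
        ⋂ (j : ℕ), {ω : ℕ → ↥(Delta θ p) | (∀ m, m < j → (ω m : ℂ) = 0) →
          (ω j : ℂ) = 0 ∨ (ω j : ℂ) = 1} := by
      ext ω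
      simp only [Set.mem_iInter, Set.mem_setOf_eq]
      exact firstNonzero_one_iff _
    rw [hrw]
    refine isClosed_iInter fun j => ?_
    have hrw2 : {ω : ℕ → ↥(Delta θ p) | (∀ m, m < j → (ω m : ℂ) = 0) →
        (ω j : ℂ) = 0 ∨ (ω j : ℂ) = 1} =
        (⋃ m ∈ Set.Iio j, {ω : ℕ → ↥(Delta θ p) | (ω m : ℂ) ≠ 0}) ∪
        ({ω | (ω j : ℂ) = 0} ∪ {ω | (ω j : ℂ) = 1}) := by
      ext ω
      simp only [Set.mem_setOf_eq, Set.mem_union, Set.mem_iUnion, Set.mem_Iio, exists_prop]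
      constructor
      · intro h
        by_cases hall : ∀ m, m < j → (ω m : ℂ) = 0
        · exact Or.inr (h hall)
        · push_neg at hall
          obtain ⟨m, hm1, hm2⟩ := hall
          exact Or.inl ⟨m, hm1, hm2⟩
      · rintro (⟨m, hm1, hm2⟩ | h) hall
        · exact absurd (hall m hm1) hm2
        · exact h
    rw [hrw2]
    exact ((Set.finite_Iio j).isClosed_biUnion fun m _ => hatom m (fun x => (x:ℂ) ≠ 0)).union
      ((hatom j (fun x => (x:ℂ) = 0)).union (hatom j (fun x => (x:ℂ) = 1)))
  have hC : IsClosed C :=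
    (hatom 0 (fun x => (x : ℂ) = 0)).inter (hGRCclosed.inter hFNclosed)
  rw [himg]
  exact (hC.isCompact).image hG

lemma attractor_approx (α : ℂ) (θ : ℝ) (hα : ‖α‖ < 1) {A B : Set ℂ}
    (hA : A = (fun z => α * z) '' A ∪ (fun z => α * rot θ * z + α) '' A)
    (hB : B = (fun z => α * z) '' B ∪ (fun z => α * rot θ * z + α) '' B)
    (hBne : B.Nonempty) (M : ℝ)
    (hMA : ∀ x ∈ A, ‖x‖ ≤ M) (hMB : ∀ y ∈ B, ‖y‖ ≤ M) :
    ∀ n : ℕ, ∀ x ∈ A, ∃ y ∈ B, ‖x - y‖ ≤ ‖α‖ ^ n * (2 * M) := by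
  intro n
  induction n with
  | zero =>
      intro x hx
      obtain ⟨y, hy⟩ := hBne
      refine ⟨y, hy, ?_⟩
      calc ‖x - y‖ ≤ ‖x‖ + ‖y‖ := norm_sub_le _ _
        _ ≤ M + M := add_le_add (hMA x hx) (hMB y hy)
        _ = ‖α‖ ^ 0 * (2 * M) := by ring
  | succ n ih =>
      intro x hx
      rw [hA] at hx
      rcases hx with ⟨x', hx', rfl⟩ | ⟨x', hx', rfl⟩
      · obtain ⟨y', hy', hd⟩ := ih x' hx'
        refine ⟨α * y', by rw [hB]; exact Or.inl ⟨y', hy', rfl⟩, ?_⟩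
        have he : (fun z => α * z) x' - α * y' = α * (x' - y') := by simp only; ring
        rw [he, norm_mul]
        calc ‖α‖ * ‖x' - y'‖ ≤ ‖α‖ * (‖α‖ ^ n * (2 * M)) :=
              mul_le_mul_of_nonneg_left hd (norm_nonneg α)
          _ = ‖α‖ ^ (n+1) * (2 * M) := by ring
      · obtain ⟨y', hy', hd⟩ := ih x' hx'
        refine ⟨α * rot θ * y' + α, by rw [hB]; exact Or.inr ⟨y', hy', rfl⟩, ?_⟩
        have he : (fun z => α * rot θ * z + α) x' - (α * rot θ * y' + α)
            = α * rot θ * (x' - y') := by simp only; ring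
        rw [he, norm_mul, norm_mul, rot_norm, mul_one]
        calc ‖α‖ * ‖x' - y'‖ ≤ ‖α‖ * (‖α‖ ^ n * (2 * M)) :=
              mul_le_mul_of_nonneg_left hd (norm_nonneg α)
          _ = ‖α‖ ^ (n+1) * (2 * M) := by ring

lemma attractor_subset (α : ℂ) (θ : ℝ) (hα : ‖α‖ < 1) {A B : Set ℂ}
    (hA : A = (fun z => α * z) '' A ∪ (fun z => α * rot θ * z + α) '' A)
    (hB : B = (fun z => α * z) '' B ∪ (fun z => α * rot θ * z + α) '' B)
    (hBne : B.Nonempty) (hBcl : IsClosed B) (M : ℝ)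
    (hMA : ∀ x ∈ A, ‖x‖ ≤ M) (hMB : ∀ y ∈ B, ‖y‖ ≤ M) : A ⊆ B := by
  intro x hx
  rw [← hBcl.closure_eq, Metric.mem_closure_iff]
  intro ε hε
  have h0 : Filter.Tendsto (fun n : ℕ => ‖α‖ ^ n * (2 * M)) Filter.atTop (nhds 0) := by
    have := tendsto_pow_atTop_nhds_zero_of_lt_one (norm_nonneg α) hα
    simpa using this.mul_const (2 * M)
  obtain ⟨n, hn⟩ := (h0.eventually_lt_const hε).exists
  obtain ⟨y, hy, hd⟩ := attractor_approx α θ hα hA hB hBne M hMA hMB n x hx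
  exact ⟨y, hy, lt_of_le_of_lt (by rwa [dist_eq_norm]) hn⟩


/-- X₁ is the attractor of the IFS {ψ₁(z)=αz, ψ₂(z)=αe^{iθ}z+α}: it is
nonempty, compact, satisfies the set equation, and any nonempty compact solution equals it. -/
theorem X1_is_attractor (α : ℂ) (θ : ℝ) (p : ℕ) (q : ℤ) (hp : 0 < p)
    (hθ : θ = 2 * Real.pi * (q : ℝ) / (p : ℝ)) (hα0 : 0 < ‖α‖) (hα : ‖α‖ < 1) :
    (Xc α θ p 1).Nonempty ∧ IsCompact (Xc α θ p 1) ∧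
    Xc α θ p 1 =
      (fun z => α * z) '' Xc α θ p 1 ∪ (fun z => α * rot θ * z + α) '' Xc α θ p 1 ∧
    ∀ K : Set ℂ, K.Nonempty → IsCompact K →
      K = (fun z => α * z) '' K ∪ (fun z => α * rot θ * z + α) '' K →
      K = Xc α θ p 1 := by
  have h1 := rot_pow_p θ p q hp hθ
  have hne := X1_nonempty α θ p
  have hcpt := X1_compact α θ p hα
  have heq := X1_set_eq α θ p hp h1 hα
  refine ⟨hne, hcpt, heq, ?_⟩
  intro K hKne hKcpt hKeq
  obtain ⟨M₁, hM₁⟩ := hKcpt.isBounded.exists_norm_le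
  obtain ⟨M₂, hM₂⟩ := hcpt.isBounded.exists_norm_le
  have hMK : ∀ x ∈ K, ‖x‖ ≤ max M₁ M₂ := fun x hx => (hM₁ x hx).trans (le_max_left _ _)
  have hMX : ∀ x ∈ Xc α θ p 1, ‖x‖ ≤ max M₁ M₂ := fun x hx =>
    (hM₂ x hx).trans (le_max_right _ _)
  exact Set.Subset.antisymm
    (attractor_subset α θ hα hKeq heq hne hcpt.isClosed (max M₁ M₂) hMK hMX)
    (attractor_subset α θ hα heq hKeq hKne hKcpt.isClosed (max M₁ M₂) hMX hMK)
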